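/- Let m, h > 0 and let V : ℝ → ℝ be differentiable. Suppose real numbers q_j, q_{j+ξ}, q_{j+1−ξ}, q_{j+1} satisfy the internal equations of the nonlinear Lobatto scheme, and define p_{j+1} = ∂L_d/∂q_r(q_j, q_{j+ξ}, q_{j+1−ξ}, q_{j+1}) and p_j = −∂L_d/∂q_ℓ(q_j, q_{j+ξ}, q_{j+1−ξ}, q_{j+1}). Then p_{j+1} − p_j + (h/12)[V′(q_j) + 5(V′(q_{j+ξ}) + V′(q_{j+1−ξ})) + V′(q_{j+1})] = 0 and q_{j+1} − q_j − (h²/(24m))[V′(q_{j+1}) + √5(V′(q_{j+1−ξ}) − V′(q_{j+ξ})) − V′(q_j)] − (h/(2m))(p_{j+1} + p_j) = 0. -/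

import Mathlib

/-- The nonlinear discrete Lagrangian with mass `m`, time step `h` and potential `V`. -/
noncomputable def LdNL (m h : ℝ) (V : ℝ → ℝ) (qℓ qξ q1mξ qr : ℝ) : ℝ :=
  (m / (12 * h)) *
    (26 * (qℓ^2 + qr^2) - 2 * qℓ * qr + 50 * (qξ^2 - qξ * q1mξ + q1mξ^2)
      - 25 * (qℓ + qr) * (qξ + q1mξ)
      - 15 * Real.sqrt 5 * (qℓ - qr) * (qξ - q1mξ))
  - (h/12) * (V qℓ + 5 * (V qξ + V q1mξ) + V qr)

lemma deriv_quad_sub (a b c k : ℝ) (V : ℝ → ℝ) (hV : Differentiable ℝ V) (x : ℝ) :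
    deriv (fun y => a*y^2 + b*y + c - k * V y) x = 2*a*x + b - k * deriv V x := by
  have hp : HasDerivAt (fun y : ℝ => a*y^2 + b*y + c) (2*a*x + b) x := by
    have h2 := ((hasDerivAt_pow 2 x).const_mul a).add ((hasDerivAt_id x).const_mul b)
    have h3 : HasDerivAt (fun y : ℝ => a*y^2 + b*y + c) _ x := h2.add_const c
    convert h3 using 1
    simp; ring
  exact (hp.sub ((hV x).hasDerivAt.const_mul k)).deriv

/-- The discrete Hamiltonian dynamics of the nonlinear Lobatto scheme: with the momenta
defined from the discrete Lagrangian, the two stated update equations hold. -/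
theorem discrete_hamiltonian_dynamics (m h : ℝ) (hm : 0 < m) (hh : 0 < h)
    (V : ℝ → ℝ) (hV : Differentiable ℝ V) (qj qjpξ qjp1mξ qjp1 : ℝ)
    (hinta : qjpξ - (h^2/(30*m)) * (deriv V qjp1mξ + 2 * deriv V qjpξ)
        = ((5 + Real.sqrt 5)/10) * qj + ((5 - Real.sqrt 5)/10) * qjp1)
    (hintb : qjp1mξ - (h^2/(30*m)) * (2 * deriv V qjp1mξ + deriv V qjpξ)
        = ((5 - Real.sqrt 5)/10) * qj + ((5 + Real.sqrt 5)/10) * qjp1) :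
    let pjp1 : ℝ := deriv (fun x => LdNL m h V qj qjpξ qjp1mξ x) qjp1
    let pj : ℝ := -deriv (fun x => LdNL m h V x qjpξ qjp1mξ qjp1) qj
    pjp1 - pj + (h/12) * (deriv V qj + 5 * (deriv V qjpξ + deriv V qjp1mξ)
        + deriv V qjp1) = 0
    ∧ qjp1 - qj - (h^2/(24*m)) * (deriv V qjp1
          + Real.sqrt 5 * (deriv V qjp1mξ - deriv V qjpξ) - deriv V qj)
        - (h/(2*m)) * (pjp1 + pj) = 0 := by
  intro pjp1 pj
  set s := Real.sqrt 5 with hsdef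
  have hs : s * s = 5 := Real.mul_self_sqrt (by norm_num)
  have hm' : m ≠ 0 := ne_of_gt hm
  have hh' : h ≠ 0 := ne_of_gt hh
  have e1 : (fun x => LdNL m h V qj qjpξ qjp1mξ x)
      = fun x => (m/(12*h)*26)*x^2
          + (m/(12*h)*(-2*qj - 25*(qjpξ+qjp1mξ) + 15*s*(qjpξ - qjp1mξ)))*x
          + (m/(12*h)*(26*qj^2 + 50*(qjpξ^2 - qjpξ*qjp1mξ + qjp1mξ^2)
              - 25*qj*(qjpξ+qjp1mξ) - 15*s*qj*(qjpξ - qjp1mξ))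
            - (h/12)*(V qj + 5*(V qjpξ + V qjp1mξ)))
          - (h/12) * V x := by
    funext x; unfold LdNL; ring
  have e2 : (fun x => LdNL m h V x qjpξ qjp1mξ qjp1)
      = fun x => (m/(12*h)*26)*x^2
          + (m/(12*h)*(-2*qjp1 - 25*(qjpξ+qjp1mξ) - 15*s*(qjpξ - qjp1mξ)))*x
          + (m/(12*h)*(26*qjp1^2 + 50*(qjpξ^2 - qjpξ*qjp1mξ + qjp1mξ^2)
              - 25*qjp1*(qjpξ+qjp1mξ) + 15*s*qjp1*(qjpξ - qjp1mξ))
            - (h/12)*(V qjp1 + 5*(V qjpξ + V qjp1mξ)))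
          - (h/12) * V x := by
    funext x; unfold LdNL; ring
  have hp1 : pjp1 = 2*(m/(12*h)*26)*qjp1
      + (m/(12*h)*(-2*qj - 25*(qjpξ+qjp1mξ) + 15*s*(qjpξ - qjp1mξ)))
      - (h/12) * deriv V qjp1 := by
    show deriv _ _ = _
    rw [e1, deriv_quad_sub _ _ _ _ V hV]
  have hp0 : pj = -(2*(m/(12*h)*26)*qj
      + (m/(12*h)*(-2*qjp1 - 25*(qjpξ+qjp1mξ) - 15*s*(qjpξ - qjp1mξ)))
      - (h/12) * deriv V qj) := by
    show -deriv _ _ = _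
    rw [e2, deriv_quad_sub _ _ _ _ V hV]
  rw [hp1, hp0]
  field_simp at hinta hintb
  constructor
  · field_simp
    linear_combination (-1/6 : ℝ) * hinta + (-1/6 : ℝ) * hintb
  · field_simp
    linear_combination (-(12/5)*s) * hinta + ((12/5)*s) * hintb
      + (144*m*(qjp1-qj)) * hs
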